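/- Let c ∈ (-1, 0) and let p(s) = √(-c)·tanh(√(-c)·s), a solution of p' + p² + c = 0 with p(0) = 0. If z' = p and y' = e^z·√(1 - p²), then z(s) = (1/√(-c))·log(cosh(√(-c)s)) has a unique critical point at s = 0 which is a strict minimum, and |y'(s)| ≥ √(1 + c) > 0 for all s, so y is an unbounded strictly monotone function defined on all of ℝ. -/

import Mathlib

open Real

private lemma tanh_hasDeriv (x : ℝ) : HasDerivAt Real.tanh (1 - Real.tanh x ^ 2) x := by
  have h : HasDerivAt (fun t => Real.sinh t / Real.cosh t)
      ((Real.cosh x * Real.cosh x - Real.sinh x * Real.sinh x) / Real.cosh x ^ 2) x :=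
    (Real.hasDerivAt_sinh x).div (Real.hasDerivAt_cosh x) (Real.cosh_pos x).ne'
  have he : (fun t => Real.sinh t / Real.cosh t) = Real.tanh := by
    funext t; rw [Real.tanh_eq_sinh_div_cosh]
  rw [he] at h
  convert h using 1
  have h1 : Real.cosh x ^ 2 - Real.sinh x ^ 2 = 1 := Real.cosh_sq_sub_sinh_sq x
  rw [Real.tanh_eq_sinh_div_cosh]
  field_simp

private lemma tanh_sq_lt_one (x : ℝ) : Real.tanh x ^ 2 < 1 := by
  rw [Real.tanh_eq_sinh_div_cosh, div_pow, div_lt_one (by positivity)]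
  nlinarith [Real.cosh_sq_sub_sinh_sq x]

private lemma tanh_zero_iff (x : ℝ) : Real.tanh x = 0 ↔ x = 0 := by
  rw [Real.tanh_eq_sinh_div_cosh, div_eq_zero_iff]
  simp [Real.sinh_eq_zero, (Real.cosh_pos x).ne']

theorem stmt_5 (c : ℝ) (hc : c ∈ Set.Ioo (-1 : ℝ) 0)
    (p : ℝ → ℝ) (hp : ∀ s, p s = sqrt (-c) * tanh (sqrt (-c) * s)) :
    (∀ s, HasDerivAt p (-(p s ^ 2) - c) s) ∧ p 0 = 0 ∧
    ∀ (z : ℝ → ℝ), (∀ s, HasDerivAt z (p s) s) → z 0 = 0 →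
      (∀ s, z s = log (cosh (sqrt (-c) * s))) ∧
      (∀ s, (p s = 0 ↔ s = 0)) ∧
      (∀ s, s ≠ 0 → z 0 < z s) ∧
      ∀ (y : ℝ → ℝ), (∀ s, HasDerivAt y (exp (z s) * sqrt (1 - p s ^ 2)) s) →
        (∀ s, sqrt (1 + c) ≤ |exp (z s) * sqrt (1 - p s ^ 2)|) ∧
        StrictMono y ∧ ¬ BddAbove (Set.range y) ∧ ¬ BddBelow (Set.range y) := by
  obtain ⟨hc1, hc0⟩ := hc
  set a := sqrt (-c) with ha
  have hcneg : (0:ℝ) < -c := by linarith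
  have ha2 : a ^ 2 = -c := Real.sq_sqrt hcneg.le
  have hapos : 0 < a := Real.sqrt_pos.mpr hcneg
  -- derivative of p
  have hpd : ∀ s, HasDerivAt p (-(p s ^ 2) - c) s := by
    intro s
    have hinner : HasDerivAt (fun t : ℝ => a * t) a s := by
      simpa using (hasDerivAt_id s).const_mul a
    have h1 : HasDerivAt (fun t => a * Real.tanh (a * t))
        (a * ((1 - Real.tanh (a * s) ^ 2) * a)) s := by
      have := ((tanh_hasDeriv (a * s)).comp s hinner).const_mul a
      simpa [Function.comp] using this
    have he : (fun t => a * Real.tanh (a * t)) = p := by funext t; rw [hp t]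
    rw [he] at h1
    convert h1 using 1
    rw [hp s]; nlinarith [ha2]
  have hp0 : p 0 = 0 := by simp [hp 0, Real.tanh_eq_sinh_div_cosh]
  refine ⟨hpd, hp0, ?_⟩
  intro z hz hz0
  -- z formula
  have hzfd : ∀ s, HasDerivAt (fun t => log (cosh (a * t))) (p s) s := by
    intro s
    have hinner : HasDerivAt (fun t : ℝ => a * t) a s := by
      simpa using (hasDerivAt_id s).const_mul a
    have h1 : HasDerivAt (fun t => Real.cosh (a * t)) (Real.sinh (a * s) * a) s := by
      have := (Real.hasDerivAt_cosh (a * s)).comp s hinner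
      exact this
    have h2 := (Real.hasDerivAt_log (Real.cosh_pos (a * s)).ne').comp s h1
    refine h2.congr_deriv ?_
    rw [hp s, Real.tanh_eq_sinh_div_cosh]
    field_simp
  have hzeq : ∀ s, z s = log (cosh (a * s)) := by
    have hconst : ∀ s t : ℝ, z s - log (cosh (a * s)) = z t - log (cosh (a * t)) := by
      have : ∀ x, HasDerivAt (fun t => z t - log (cosh (a * t))) 0 x := by
        intro x
        have := (hz x).sub (hzfd x)
        exact this.congr_deriv (by simp)
      intro s t
      have hc' := is_const_of_deriv_eq_zero (f := fun t => z t - log (cosh (a * t)))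
        (fun x => (this x).differentiableAt) (fun x => (this x).deriv) s t
      simpa using hc'
    intro s
    have h := hconst s 0
    simp [hz0] at h
    linarith [h]
  have hpz : ∀ s, (p s = 0 ↔ s = 0) := by
    intro s
    rw [hp s]
    rw [mul_eq_zero]
    constructor
    · rintro (h | h)
      · exact absurd h hapos.ne'
      · have := (tanh_zero_iff (a * s)).mp h
        rcases mul_eq_zero.mp this with h' | h'
        · exact absurd h' hapos.ne'
        · exact h'
    · rintro rfl; simp [Real.tanh_eq_sinh_div_cosh]
  have hzmin : ∀ s, s ≠ 0 → z 0 < z s := by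
    intro s hs
    rw [hzeq 0, hzeq s]
    simp only [mul_zero, Real.cosh_zero, Real.log_one]
    have h1 : (1:ℝ) < cosh (a * s) := Real.one_lt_cosh.mpr (by
      exact mul_ne_zero hapos.ne' hs)
    exact Real.log_pos h1
  refine ⟨hzeq, hpz, hzmin, ?_⟩
  intro y hy
  have h1c : (0:ℝ) < 1 + c := by linarith
  -- lower bound on |y'|
  have hlow : ∀ s, sqrt (1 + c) ≤ exp (z s) * sqrt (1 - p s ^ 2) := by
    intro s
    have hez : (1:ℝ) ≤ exp (z s) := by
      rcases eq_or_ne s 0 with rfl | hs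
      · simp [hz0]
      · have := hzmin s hs
        rw [hz0] at this
        calc (1:ℝ) = exp 0 := (Real.exp_zero).symm
          _ ≤ exp (z s) := Real.exp_le_exp.mpr this.le
    have hps : 1 + c ≤ 1 - p s ^ 2 := by
      rw [hp s, mul_pow]
      have ht : Real.tanh (a * s) ^ 2 ≤ 1 := (_root_.tanh_sq_lt_one (a * s)).le
      nlinarith [ha2, sq_nonneg (Real.tanh (a * s))]
    calc sqrt (1 + c) ≤ sqrt (1 - p s ^ 2) := Real.sqrt_le_sqrt hps
      _ = 1 * sqrt (1 - p s ^ 2) := (one_mul _).symm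
      _ ≤ exp (z s) * sqrt (1 - p s ^ 2) := by
          exact mul_le_mul_of_nonneg_right hez (Real.sqrt_nonneg _)
  have habs : ∀ s, sqrt (1 + c) ≤ |exp (z s) * sqrt (1 - p s ^ 2)| :=
    fun s => (hlow s).trans (le_abs_self _)
  have hC : 0 < sqrt (1 + c) := Real.sqrt_pos.mpr h1c
  have hyd' : ∀ s, 0 < exp (z s) * sqrt (1 - p s ^ 2) :=
    fun s => lt_of_lt_of_le hC (hlow s)
  have hdiff : Differentiable ℝ y := fun s => (hy s).differentiableAt
  have hmono : StrictMono y :=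
    strictMono_of_deriv_pos fun s => by rw [(hy s).deriv]; exact hyd' s
  have hgrow : ∀ u v : ℝ, u ≤ v → sqrt (1 + c) * (v - u) ≤ y v - y u := by
    intro u v huv
    exact mul_sub_le_image_sub_of_le_deriv hdiff
      (fun x => by rw [(hy x).deriv]; exact hlow x) huv
  refine ⟨habs, hmono, ?_, ?_⟩
  · rintro ⟨b, hb⟩
    set s := max 1 ((b - y 0) / sqrt (1 + c) + 1) with hs
    have hs0 : (0:ℝ) ≤ s := le_trans zero_le_one (le_max_left _ _)
    have h1 := hgrow 0 s hs0
    have h2 : (b - y 0) / sqrt (1 + c) + 1 ≤ s := le_max_right _ _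
    have h3 : b - y 0 < sqrt (1 + c) * s := by
      have hm := mul_le_mul_of_nonneg_left h2 hC.le
      have hcan : sqrt (1 + c) * ((b - y 0) / sqrt (1 + c)) = b - y 0 := by
        field_simp
      nlinarith
    have h4 : b < y s := by nlinarith
    exact absurd (hb (Set.mem_range_self s)) (not_le.mpr h4)
  · rintro ⟨b, hb⟩
    set s := min (-1) ((b - y 0) / sqrt (1 + c) - 1) with hs
    have hs0 : s ≤ 0 := le_trans (min_le_left _ _) (by norm_num)
    have h1 := hgrow s 0 hs0
    have h2 : s ≤ (b - y 0) / sqrt (1 + c) - 1 := min_le_right _ _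
    have h3 : sqrt (1 + c) * s < b - y 0 := by
      have hm := mul_le_mul_of_nonneg_left h2 hC.le
      have hcan : sqrt (1 + c) * ((b - y 0) / sqrt (1 + c)) = b - y 0 := by
        field_simp
      nlinarith
    have h4 : y s < b := by nlinarith
    exact absurd (hb (Set.mem_range_self s)) (not_le.mpr h4)
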